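/- Under the uplink C-RAN distribution ∏_k p(x_k) p(y_1^L|x_1^K) ∏_ℓ p(ŷ_ℓ|y_ℓ), for any S ⊆ [K] and T ⊆ [L], if a tuple (R_1,…,R_K,C_1,…,C_L) satisfies C(T') − R(S') ≥ I(Y_{T'};Ŷ_{T'} | X_1^K) − I(X_{S'};Ŷ_{(T')^c} | X_{(S')^c}) for all S' ⊆ [K], T' ⊆ [L] (membership in R_JD), and in addition C([L]) − R([K]) = I(Y_1^L;Ŷ_1^L | X_1^K), then C(T) − R(S) ≤ I(Y_T; Ŷ_T | X_S). -/

import Mathlib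

open scoped BigOperators

namespace CRAN

variable {Ω : Type*} [Fintype Ω]

/-- `p` is a probability mass function on the finite sample space `Ω`. -/
def IsPMF (p : Ω → ℝ) : Prop := (∀ ω, 0 ≤ p ω) ∧ ∑ ω, p ω = 1

/-- Distribution (pushforward pmf) of a random variable `X` under `p`. -/
noncomputable def dist {α : Type*} [DecidableEq α] (p : Ω → ℝ) (X : Ω → α) (a : α) : ℝ :=
  ∑ ω, if X ω = a then p ω else 0

/-- Mutual information `I(X; Y)` for finite discrete random variables. -/
noncomputable def mi {α β : Type*} [Fintype α] [DecidableEq α] [Fintype β] [DecidableEq β]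
    (p : Ω → ℝ) (X : Ω → α) (Y : Ω → β) : ℝ :=
  ∑ a : α, ∑ b : β,
    dist p (fun ω => (X ω, Y ω)) (a, b) *
      Real.log (dist p (fun ω => (X ω, Y ω)) (a, b) / (dist p X a * dist p Y b))

/-- Conditional mutual information `I(X; Y | Z)`. -/
noncomputable def cmi {α β γ : Type*} [Fintype α] [DecidableEq α] [Fintype β] [DecidableEq β]
    [Fintype γ] [DecidableEq γ] (p : Ω → ℝ) (X : Ω → α) (Y : Ω → β) (Z : Ω → γ) : ℝ :=
  ∑ a : α, ∑ b : β, ∑ c : γ,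
    dist p (fun ω => (X ω, Y ω, Z ω)) (a, b, c) *
      Real.log ((dist p Z c * dist p (fun ω => (X ω, Y ω, Z ω)) (a, b, c)) /
        (dist p (fun ω => (X ω, Z ω)) (a, c) * dist p (fun ω => (Y ω, Z ω)) (b, c)))

/-- Shannon entropy `H(X)`. -/
noncomputable def ent {α : Type*} [Fintype α] [DecidableEq α] (p : Ω → ℝ) (X : Ω → α) : ℝ :=
  ∑ a : α, Real.negMulLog (dist p X a)

/-- `X` and `Y` are independent under `p`. -/
def Indep {α β : Type*} [DecidableEq α] [DecidableEq β]
    (p : Ω → ℝ) (X : Ω → α) (Y : Ω → β) : Prop :=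
  ∀ a b, dist p (fun ω => (X ω, Y ω)) (a, b) = dist p X a * dist p Y b

/-- `X` and `Y` are conditionally independent given `Z` under `p`. -/
def CondIndep {α β γ : Type*} [DecidableEq α] [DecidableEq β] [DecidableEq γ]
    (p : Ω → ℝ) (X : Ω → α) (Y : Ω → β) (Z : Ω → γ) : Prop :=
  ∀ a b c, dist p Z c * dist p (fun ω => (X ω, Y ω, Z ω)) (a, b, c) =
    dist p (fun ω => (X ω, Z ω)) (a, c) * dist p (fun ω => (Y ω, Z ω)) (b, c)

/-- A finite family of random variables is mutually independent under `p`. -/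
def MutIndep {ι α : Type*} [Fintype ι] [DecidableEq ι] [DecidableEq α]
    (p : Ω → ℝ) (X : ι → Ω → α) : Prop :=
  ∀ f : ι → α, dist p (fun ω i => X i ω) f = ∏ i, dist p (X i) (f i)

/-- The sub-tuple `(X_i : i ∈ S)` of a family of random variables. -/
def tup {ι 𝒳 : Type*} (X : ι → Ω → 𝒳) (S : Finset ι) : Ω → (↥S → 𝒳) :=
  fun ω i => X i.1 ω

/-- The joint law of `(X_1^K, Y_1^L, Ŷ_1^L)` factorizes as
`∏ₖ p(xₖ) · p(y_1^L | x_1^K) · ∏ₗ p(ŷₗ | yₗ)` (uplink C-RAN distribution). -/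
def CRANFactor {K L : ℕ} {𝒳 𝒴 𝒵 : Type*} [DecidableEq 𝒳] [DecidableEq 𝒴] [DecidableEq 𝒵]
    (p : Ω → ℝ) (X : Fin K → Ω → 𝒳) (Y : Fin L → Ω → 𝒴) (Yh : Fin L → Ω → 𝒵) : Prop :=
  ∃ (q : (Fin K → 𝒳) → (Fin L → 𝒴) → ℝ) (r : Fin L → 𝒴 → 𝒵 → ℝ),
    (∀ x y, 0 ≤ q x y) ∧ (∀ ℓ y z, 0 ≤ r ℓ y z) ∧
    ∀ (x : Fin K → 𝒳) (y : Fin L → 𝒴) (z : Fin L → 𝒵),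
      dist p (fun ω => (fun i => X i ω, fun ℓ => Y ℓ ω, fun ℓ => Yh ℓ ω)) (x, y, z) =
        (∏ i, dist p (X i) (x i)) * q x y * ∏ ℓ, r ℓ (y ℓ) (z ℓ)


open Finset

section Aux
variable {A B C' : Type*}

noncomputable def pf [Fintype A] [DecidableEq B] (f : A → B) (P : A → ℝ) (b : B) : ℝ :=
  ∑ a, if f a = b then P a else 0

noncomputable def Hd [Fintype A] (P : A → ℝ) : ℝ := ∑ a, Real.negMulLog (P a)

lemma dist_eq_pf [DecidableEq B] (p : Ω → ℝ) (X : Ω → B) : dist p X = pf X p := rfl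

lemma pf_comp [Fintype A] [Fintype B] [DecidableEq B] [DecidableEq C'] (f : B → C') (g : A → B) (P : A → ℝ) :
    pf f (pf g P) = pf (f ∘ g) P := by
  classical
  funext c
  unfold pf
  have h : ∀ b, (if f b = c then (∑ a, if g a = b then P a else 0) else 0)
      = ∑ a, if g a = b then (if f b = c then P a else 0) else 0 := by
    intro b; split_ifs with h
    · exact Finset.sum_congr rfl fun a _ => by split_ifs <;> rfl
    · simp
  simp only [h]
  rw [Finset.sum_comm]
  refine Finset.sum_congr rfl fun a _ => ?_
  rw [Finset.sum_eq_single (g a)]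
  · simp
  · intro b _ hb; rw [if_neg (fun hh => hb hh.symm)]
  · simp

lemma pf_nonneg [Fintype A] [DecidableEq B] (f : A → B) (P : A → ℝ) (hP : ∀ a, 0 ≤ P a) (b : B) :
    0 ≤ pf f P b := by
  refine Finset.sum_nonneg fun a _ => ?_
  split <;> simp [hP a]

lemma pf_apply_inj [Fintype A] [DecidableEq A] [DecidableEq B] {f : A → B}
    (hf : Function.Injective f) (P : A → ℝ) (a : A) : pf f P (f a) = P a := by
  rw [pf, Finset.sum_eq_single a]
  · simp
  · intro b _ hb; rw [if_neg (fun h => hb (hf h))]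
  · simp

lemma Hd_pf_inj [Fintype A] [DecidableEq A] [Fintype B] [DecidableEq B] {f : A → B}
    (hf : Function.Injective f) (P : A → ℝ) : Hd (pf f P) = Hd P := by
  classical
  unfold Hd
  rw [← Finset.sum_subset (Finset.subset_univ (Finset.univ.image f))]
  · rw [Finset.sum_image (fun a _ b _ h => hf h)]
    exact Finset.sum_congr rfl fun a _ => by rw [pf_apply_inj hf]
  · intro b _ hb
    have : pf f P b = 0 := by
      rw [pf, Finset.sum_eq_zero]
      intro a _
      rw [if_neg]
      intro h
      exact hb (Finset.mem_image.2 ⟨a, Finset.mem_univ a, h⟩)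
    simp [this, Real.negMulLog]

end Aux
section CMIsec
variable {α β γ : Type*} [Fintype α] [DecidableEq α] [Fintype β] [DecidableEq β]
  [Fintype γ] [DecidableEq γ]

noncomputable def CMI (Q : α × β × γ → ℝ) : ℝ :=
  ∑ a, ∑ b, ∑ c,
    Q (a,b,c) * Real.log ((pf (fun t => t.2.2) Q c * Q (a,b,c)) /
      (pf (fun t => (t.1, t.2.2)) Q (a,c) * pf (fun t => (t.2.1, t.2.2)) Q (b,c)))

lemma cmi_eq_CMI (p : Ω → ℝ) (A : Ω → α) (B : Ω → β) (C : Ω → γ) :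
    cmi p A B C = CMI (dist p (fun ω => (A ω, B ω, C ω))) := by
  unfold cmi CMI
  simp only [dist_eq_pf, pf_comp]
  rfl

lemma pf13_eq (Q : α × β × γ → ℝ) (a : α) (c : γ) :
    pf (fun t => (t.1, t.2.2)) Q (a,c) = ∑ b, Q (a,b,c) := by
  classical
  unfold pf
  rw [Fintype.sum_prod_type]
  rw [Finset.sum_eq_single a]
  · simp only [Fintype.sum_prod_type]
    refine Finset.sum_congr rfl fun b _ => ?_
    rw [Finset.sum_eq_single c] <;> simp +contextual [Prod.ext_iff]
  · intro a' _ ha'; refine Finset.sum_eq_zero fun t _ => ?_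
    simp [Prod.ext_iff, ha']
  · simp

lemma pf23_eq (Q : α × β × γ → ℝ) (b : β) (c : γ) :
    pf (fun t => (t.2.1, t.2.2)) Q (b,c) = ∑ a, Q (a,b,c) := by
  classical
  unfold pf
  rw [Fintype.sum_prod_type]
  refine Finset.sum_congr rfl fun a _ => ?_
  rw [Fintype.sum_prod_type]
  rw [Finset.sum_eq_single b]
  · rw [Finset.sum_eq_single c] <;> simp +contextual [Prod.ext_iff]
  · intro b' _ hb'; refine Finset.sum_eq_zero fun t _ => ?_
    simp [Prod.ext_iff, hb']
  · simp

lemma pf3_eq (Q : α × β × γ → ℝ) (c : γ) :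
    pf (fun t => t.2.2) Q c = ∑ a, ∑ b, Q (a,b,c) := by
  classical
  unfold pf
  rw [Fintype.sum_prod_type]
  refine Finset.sum_congr rfl fun a _ => ?_
  rw [Fintype.sum_prod_type]
  refine Finset.sum_congr rfl fun b _ => ?_
  rw [Finset.sum_eq_single c] <;> simp +contextual
lemma sum_rot {A B C : Type*} [Fintype A] [Fintype B] [Fintype C] (f : A → B → C → ℝ) :
    ∑ a, ∑ b, ∑ c, f a b c = ∑ c, ∑ a, ∑ b, f a b c := by
  have h1 : ∀ a, (∑ b, ∑ c, f a b c) = ∑ c, ∑ b, f a b c := fun a => Finset.sum_comm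
  simp only [h1]
  exact Finset.sum_comm

lemma sum_comm4 {A B C D : Type*} [Fintype A] [Fintype B] [Fintype C] [Fintype D]
    (f : A → B → C → D → ℝ) :
    ∑ a, ∑ b, ∑ c, ∑ d, f a b c d = ∑ c, ∑ d, ∑ a, ∑ b, f a b c d := by
  have h1 : ∀ a, (∑ b, ∑ c, ∑ d, f a b c d) = ∑ c, ∑ d, ∑ b, f a b c d := fun a => by
    rw [sum_rot, sum_rot]
  simp only [h1]
  rw [sum_rot, sum_rot]

lemma Hd_eq {A : Type*} [Fintype A] (P : A → ℝ) : Hd P = -∑ a, P a * Real.log (P a) := by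
  unfold Hd Real.negMulLog
  rw [← Finset.sum_neg_distrib]
  exact Finset.sum_congr rfl fun a _ => by ring

lemma CMI_eq_Hd (Q : α × β × γ → ℝ) (hQ : ∀ t, 0 ≤ Q t) :
    CMI Q = Hd (pf (fun t => (t.1, t.2.2)) Q) + Hd (pf (fun t => (t.2.1, t.2.2)) Q)
      - Hd (pf (fun t => t.2.2) Q) - Hd Q := by
  classical
  have key : ∀ a b c, Q (a,b,c) * Real.log ((pf (fun t => t.2.2) Q c * Q (a,b,c)) /
      (pf (fun t => (t.1, t.2.2)) Q (a,c) * pf (fun t => (t.2.1, t.2.2)) Q (b,c)))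
      = Q (a,b,c) * Real.log (pf (fun t => t.2.2) Q c)
        + Q (a,b,c) * Real.log (Q (a,b,c))
        - Q (a,b,c) * Real.log (pf (fun t => (t.1, t.2.2)) Q (a,c))
        - Q (a,b,c) * Real.log (pf (fun t => (t.2.1, t.2.2)) Q (b,c)) := by
    intro a b c
    rcases eq_or_lt_of_le (hQ (a,b,c)) with h | h
    · rw [← h]; ring
    · have h13 : 0 < pf (fun t => (t.1, t.2.2)) Q (a,c) := by
        rw [pf13_eq]
        exact lt_of_lt_of_le h (Finset.single_le_sum (fun b _ => hQ (a,b,c)) (Finset.mem_univ b))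
      have h23 : 0 < pf (fun t => (t.2.1, t.2.2)) Q (b,c) := by
        rw [pf23_eq]
        exact lt_of_lt_of_le h (Finset.single_le_sum (fun a _ => hQ (a,b,c)) (Finset.mem_univ a))
      have h3 : 0 < pf (fun t => t.2.2) Q c := by
        rw [pf3_eq]
        refine lt_of_lt_of_le h13 ?_
        rw [pf13_eq]
        exact Finset.single_le_sum (f := fun a => ∑ b, Q (a,b,c))
          (fun a _ => Finset.sum_nonneg fun b _ => hQ (a,b,c)) (Finset.mem_univ a)
      rw [Real.log_div (by positivity) (by positivity), Real.log_mul (ne_of_gt h3) (ne_of_gt h),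
        Real.log_mul (ne_of_gt h13) (ne_of_gt h23)]
      ring
  unfold CMI
  simp only [key, Finset.sum_sub_distrib, Finset.sum_add_distrib]
  have e3 : (∑ a, ∑ b, ∑ c, Q (a,b,c) * Real.log (pf (fun t => t.2.2) Q c))
      = ∑ c, pf (fun t => t.2.2) Q c * Real.log (pf (fun t => t.2.2) Q c) := by
    rw [sum_rot]
    refine Finset.sum_congr rfl fun c _ => ?_
    rw [pf3_eq, Finset.sum_mul]
    exact Finset.sum_congr rfl fun a _ => by rw [Finset.sum_mul]
  have eQ : (∑ a, ∑ b, ∑ c, Q (a,b,c) * Real.log (Q (a,b,c))) = -Hd Q := by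
    rw [Hd_eq, neg_neg, Fintype.sum_prod_type]
    exact Finset.sum_congr rfl fun a _ => by rw [Fintype.sum_prod_type]
  have e13 : (∑ a, ∑ b, ∑ c, Q (a,b,c) * Real.log (pf (fun t => (t.1, t.2.2)) Q (a,c)))
      = -Hd (pf (fun t => (t.1, t.2.2)) Q) := by
    rw [Hd_eq, neg_neg, Fintype.sum_prod_type]
    refine Finset.sum_congr rfl fun a _ => ?_
    rw [Finset.sum_comm]
    refine Finset.sum_congr rfl fun c _ => ?_
    rw [pf13_eq, Finset.sum_mul]
  have e23 : (∑ a, ∑ b, ∑ c, Q (a,b,c) * Real.log (pf (fun t => (t.2.1, t.2.2)) Q (b,c)))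
      = -Hd (pf (fun t => (t.2.1, t.2.2)) Q) := by
    rw [Hd_eq, neg_neg, Fintype.sum_prod_type, Finset.sum_comm]
    refine Finset.sum_congr rfl fun b _ => ?_
    rw [Finset.sum_comm]
    refine Finset.sum_congr rfl fun c _ => ?_
    rw [pf23_eq, Finset.sum_mul]
  rw [e3, eQ, e13, e23, Hd_eq (pf (fun t => t.2.2) Q)]
  ring

lemma CMI_nonneg (Q : α × β × γ → ℝ) (hQ : ∀ t, 0 ≤ Q t) : 0 ≤ CMI Q := by
  classical
  set P13 := pf (fun t : α × β × γ => (t.1, t.2.2)) Q with hP13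
  set P23 := pf (fun t : α × β × γ => (t.2.1, t.2.2)) Q with hP23
  set P3 := pf (fun t : α × β × γ => t.2.2) Q with hP3
  have h13n : ∀ a c, 0 ≤ P13 (a,c) := fun a c => pf_nonneg _ _ hQ _
  have h23n : ∀ b c, 0 ≤ P23 (b,c) := fun b c => pf_nonneg _ _ hQ _
  have h3n : ∀ c, 0 ≤ P3 c := fun c => pf_nonneg _ _ hQ _
  have key : ∀ a b c, Q (a,b,c) - P13 (a,c) * P23 (b,c) / P3 c
      ≤ Q (a,b,c) * Real.log ((P3 c * Q (a,b,c)) / (P13 (a,c) * P23 (b,c))) := by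
    intro a b c
    rcases eq_or_lt_of_le (hQ (a,b,c)) with h | h
    · rw [← h]
      simp only [zero_mul, zero_sub, neg_nonpos]
      exact div_nonneg (mul_nonneg (h13n a c) (h23n b c)) (h3n c)
    · have h13 : 0 < P13 (a,c) := by
        rw [hP13, pf13_eq]
        exact lt_of_lt_of_le h (Finset.single_le_sum (fun b _ => hQ (a,b,c)) (Finset.mem_univ b))
      have h23 : 0 < P23 (b,c) := by
        rw [hP23, pf23_eq]
        exact lt_of_lt_of_le h (Finset.single_le_sum (fun a _ => hQ (a,b,c)) (Finset.mem_univ a))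
      have h3 : 0 < P3 c := by
        rw [hP3, pf3_eq]
        refine lt_of_lt_of_le h13 ?_
        rw [hP13, pf13_eq]
        exact Finset.single_le_sum (f := fun a => ∑ b, Q (a,b,c))
          (fun a _ => Finset.sum_nonneg fun b _ => hQ (a,b,c)) (Finset.mem_univ a)
      set q := P13 (a,c) * P23 (b,c) / P3 c with hq
      have hqpos : 0 < q := by positivity
      have harg : (P3 c * Q (a,b,c)) / (P13 (a,c) * P23 (b,c)) = Q (a,b,c) / q := by
        rw [hq]; field_simp
      rw [harg]
      have hlog : Real.log (q / Q (a,b,c)) ≤ q / Q (a,b,c) - 1 :=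
        Real.log_le_sub_one_of_pos (by positivity)
      rw [Real.log_div (ne_of_gt hqpos) (ne_of_gt h)] at hlog
      rw [Real.log_div (ne_of_gt h) (ne_of_gt hqpos)]
      have := mul_le_mul_of_nonneg_left hlog (le_of_lt h)
      have hne : Q (a,b,c) ≠ 0 := ne_of_gt h
      calc Q (a,b,c) - q = Q (a,b,c) - Q (a,b,c) * (q / Q (a,b,c)) := by field_simp
        _ ≤ Q (a,b,c) * (Real.log (Q (a,b,c)) - Real.log q) := by nlinarith
  have hsum : ∑ a, ∑ b, ∑ c, (Q (a,b,c) - P13 (a,c) * P23 (b,c) / P3 c) ≤ CMI Q := by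
    unfold CMI
    refine Finset.sum_le_sum fun a _ => Finset.sum_le_sum fun b _ => Finset.sum_le_sum fun c _ => ?_
    exact key a b c
  refine le_trans ?_ hsum
  simp only [Finset.sum_sub_distrib]
  rw [sub_nonneg, sum_rot, sum_rot (f := fun a b c => Q (a,b,c))]
  refine Finset.sum_le_sum fun c _ => ?_
  have hql : ∑ a, ∑ b, P13 (a,c) * P23 (b,c) / P3 c ≤ P3 c := by
    rcases eq_or_lt_of_le (h3n c) with h | h
    · have hz : ∀ a, P13 (a,c) = 0 := by
        intro a
        have h0 : ∑ a, P13 (a,c) = P3 c := by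
          rw [hP3, pf3_eq]
          exact Finset.sum_congr rfl fun a _ => by rw [hP13, pf13_eq]
        have := (Finset.sum_eq_zero_iff_of_nonneg (fun a _ => h13n a c)).1 (by rw [h0, ← h])
        exact this a (Finset.mem_univ a)
      simp [hz, ← h]
    · have e1 : ∑ a, ∑ b, P13 (a,c) * P23 (b,c) / P3 c
          = (∑ a, P13 (a,c)) * (∑ b, P23 (b,c)) / P3 c := by
        rw [Finset.sum_mul, Finset.sum_div]
        refine Finset.sum_congr rfl fun a _ => ?_
        rw [Finset.mul_sum, Finset.sum_div]
      have e2 : ∑ a, P13 (a,c) = P3 c := by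
        rw [hP3, pf3_eq]
        exact Finset.sum_congr rfl fun a _ => by rw [hP13, pf13_eq]
      have e3 : ∑ b, P23 (b,c) = P3 c := by
        rw [hP3, pf3_eq, Finset.sum_comm]
        exact Finset.sum_congr rfl fun b _ => by rw [hP23, pf23_eq]
      rw [e1, e2, e3, mul_div_assoc, div_self (ne_of_gt h), mul_one]
  calc ∑ a, ∑ b, P13 (a,c) * P23 (b,c) / P3 c ≤ P3 c := hql
    _ = ∑ a, ∑ b, Q (a,b,c) := by rw [hP3, pf3_eq]

end CMIsec
section PiHelpers
def rT {ι κ : Type*} (S : Finset ι) (x : ι → κ) (i : ↥S) : κ := x i.1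

lemma rT_univ_inj {ι κ : Type*} [Fintype ι] :
    Function.Injective (rT (Finset.univ : Finset ι) (κ := κ)) := by
  intro x y h
  funext i
  exact congrFun h ⟨i, Finset.mem_univ i⟩

/-- Merging a `T`-indexed tuple and a `Tᶜ`-indexed tuple into a full tuple. -/
def mrgE {ι κ : Type*} [Fintype ι] [DecidableEq ι] (T : Finset ι) : ((↥T → κ) × (↥Tᶜ → κ)) ≃ (ι → κ) where
  toFun t i := if h : i ∈ T then t.1 ⟨i, h⟩ else t.2 ⟨i, Finset.mem_compl.mpr h⟩
  invFun w := (rT T w, rT Tᶜ w)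
  left_inv := by
    rintro ⟨a, b⟩
    refine Prod.ext ?_ ?_ <;> funext i
    · show (if h : i.1 ∈ T then a ⟨i.1, h⟩ else b ⟨i.1, Finset.mem_compl.mpr h⟩) = a i
      rw [dif_pos i.2]
    · show (if h : i.1 ∈ T then a ⟨i.1, h⟩ else b ⟨i.1, Finset.mem_compl.mpr h⟩) = b i
      rw [dif_neg (Finset.mem_compl.mp i.2)]
  right_inv := by
    intro w
    funext i
    by_cases h : i ∈ T
    · show (if h : i ∈ T then w i else w i) = w i
      rw [dif_pos h]
    · show (if h' : i ∈ T then w i else w i) = w i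
      rw [dif_neg h]

lemma rT_mrgE {ι κ : Type*} [Fintype ι] [DecidableEq ι] (T : Finset ι) (p : (↥T → κ) × (↥Tᶜ → κ)) :
    rT T (mrgE T p) = p.1 := by
  have := (mrgE T).symm_apply_apply p
  exact congrArg Prod.fst this

lemma mrgE_apply_rT {ι κ : Type*} [Fintype ι] [DecidableEq ι] (T : Finset ι) (x : ι → κ) :
    mrgE T (rT T x, rT Tᶜ x) = x :=
  (mrgE T).apply_symm_apply x

def rcast {ι κ : Type*} {T₁ T₂ : Finset ι} (h : T₁ = T₂) (v : ↥T₁ → κ) (i : ↥T₂) : κ :=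
  v ⟨i.1, h ▸ i.2⟩

lemma rcast_rT {ι κ : Type*} {T₁ T₂ : Finset ι} (h : T₁ = T₂) (x : ι → κ) :
    rcast h (rT T₁ x) = rT T₂ x := rfl

lemma rcast_inj {ι κ : Type*} {T₁ T₂ : Finset ι} (h : T₁ = T₂) :
    Function.Injective (rcast (κ := κ) h) := by
  subst h
  intro a b hab
  funext i
  exact congrFun hab i

lemma sum_pi_prod {ι κ : Type*} [Fintype ι] [DecidableEq ι] [Fintype κ] (F : ι → κ → ℝ) :
    ∑ w : ι → κ, ∏ i, F i (w i) = ∏ i, ∑ v, F i v := by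
  classical
  rw [Finset.prod_univ_sum (fun _ => Finset.univ) F, Fintype.piFinset_univ]

lemma sum_pi_prod_single {ι κ : Type*} [Fintype ι] [DecidableEq ι] [Fintype κ]
    (F : ι → κ → ℝ) (G : κ → ℝ) (i : ι) :
    ∑ w : ι → κ, (∏ j, F j (w j)) * G (w i)
      = (∑ v, F i v * G v) * ∏ j ∈ Finset.univ.erase i, ∑ v, F j v := by
  classical
  have h1 : ∀ w : ι → κ, (∏ j, F j (w j)) * G (w i)
      = ∏ j, (if j = i then F j (w j) * G (w j) else F j (w j)) := by
    intro w
    rw [← Finset.mul_prod_erase Finset.univ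
      (fun j => if j = i then F j (w j) * G (w j) else F j (w j)) (Finset.mem_univ i)]
    rw [if_pos rfl]
    rw [← Finset.mul_prod_erase Finset.univ (fun j => F j (w j)) (Finset.mem_univ i)]
    rw [Finset.prod_congr rfl
      (fun j hj => if_neg (Finset.mem_erase.1 hj).1 :
        ∀ j ∈ Finset.univ.erase i, (if j = i then F j (w j) * G (w j) else F j (w j)) = F j (w j))]
    ring
  calc ∑ w : ι → κ, (∏ j, F j (w j)) * G (w i)
      = ∑ w : ι → κ, ∏ j, (if j = i then F j (w j) * G (w j) else F j (w j)) :=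
        Finset.sum_congr rfl fun w _ => h1 w
    _ = ∏ j, ∑ v, (if j = i then F j v * G v else F j v) :=
        sum_pi_prod (fun j v => if j = i then F j v * G v else F j v)
    _ = (∑ v, F i v * G v) * ∏ j ∈ Finset.univ.erase i, ∑ v, F j v := by
        rw [← Finset.mul_prod_erase Finset.univ
          (fun j => ∑ v, if j = i then F j v * G v else F j v) (Finset.mem_univ i)]
        congr 1
        · exact Finset.sum_congr rfl fun v _ => if_pos rfl
        · exact Finset.prod_congr rfl fun j hj =>
            Finset.sum_congr rfl fun v _ => if_neg (Finset.mem_erase.1 hj).1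
  
lemma sum_pi_prod_restrict {ι κ : Type*} [Fintype ι] [DecidableEq ι] [Fintype κ] [DecidableEq κ]
    (T : Finset ι) (F : ι → κ → ℝ) (z : ↥T → κ) :
    ∑ w : ι → κ, (if rT T w = z then ∏ i, F i (w i) else 0)
      = (∏ i : ↥T, F i.1 (z i)) * ∏ i ∈ Tᶜ, ∑ v, F i v := by
  classical
  rw [← Equiv.sum_comp (mrgE T) (fun w => if rT T w = z then ∏ i, F i (w i) else 0),
    Fintype.sum_prod_type]
  have hprod : ∀ (w₁ : ↥T → κ) (w₂ : ↥Tᶜ → κ),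
      (∏ i, F i (mrgE T (w₁, w₂) i)) = (∏ i : ↥T, F i.1 (w₁ i)) *
        ∏ i : ↥Tᶜ, F i.1 (w₂ i) := by
    intro w₁ w₂
    rw [← Finset.prod_mul_prod_compl T (fun i => F i (mrgE T (w₁, w₂) i)),
      ← Finset.prod_coe_sort T, ← Finset.prod_coe_sort Tᶜ]
    congr 1
    · refine Finset.prod_congr rfl fun i _ => ?_
      show F i.1 (if h : i.1 ∈ T then w₁ ⟨i.1, h⟩ else w₂ ⟨i.1, Finset.mem_compl.mpr h⟩)
        = F i.1 (w₁ i)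
      rw [dif_pos i.2]
    · refine Finset.prod_congr rfl fun i _ => ?_
      show F i.1 (if h : i.1 ∈ T then w₁ ⟨i.1, h⟩ else w₂ ⟨i.1, Finset.mem_compl.mpr h⟩)
        = F i.1 (w₂ i)
      rw [dif_neg (Finset.mem_compl.mp i.2)]
  calc (∑ w₁ : ↥T → κ, ∑ w₂ : ↥Tᶜ → κ,
        if rT T (mrgE T (w₁, w₂)) = z then ∏ i, F i (mrgE T (w₁, w₂) i) else 0)
      = ∑ w₁ : ↥T → κ, ∑ w₂ : ↥Tᶜ → κ,
        (if w₁ = z then (∏ i : ↥T, F i.1 (w₁ i)) * ∏ i : ↥Tᶜ, F i.1 (w₂ i) else 0) := by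
        refine Finset.sum_congr rfl fun w₁ _ => Finset.sum_congr rfl fun w₂ _ => ?_
        rw [rT_mrgE, hprod]
    _ = (∏ i : ↥T, F i.1 (z i)) * ∑ w₂ : ↥Tᶜ → κ, ∏ i : ↥Tᶜ, F i.1 (w₂ i) := by
        rw [Finset.sum_eq_single z]
        · rw [Finset.mul_sum]
          exact Finset.sum_congr rfl fun w₂ _ => if_pos rfl
        · intro w₁ _ hw₁
          exact Finset.sum_eq_zero fun w₂ _ => if_neg hw₁
        · simp
    _ = (∏ i : ↥T, F i.1 (z i)) * ∏ i ∈ Tᶜ, ∑ v, F i v := by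
        rw [sum_pi_prod (fun (i : ↥Tᶜ) v => F i.1 v),
          Finset.prod_coe_sort Tᶜ (fun i => ∑ v, F i v)]

end PiHelpers
section Key
variable {K L : ℕ} {𝒳 𝒴 𝒵 : Type*}
variable [Fintype 𝒳] [DecidableEq 𝒳] [Fintype 𝒴] [DecidableEq 𝒴] [Fintype 𝒵] [DecidableEq 𝒵]

noncomputable def sK (r : Fin L → 𝒴 → 𝒵 → ℝ) (ℓ : Fin L) (y : 𝒴) : ℝ := ∑ z, r ℓ y z

noncomputable def psiK (r : Fin L → 𝒴 → 𝒵 → ℝ) (ℓ : Fin L) (y : 𝒴) : ℝ :=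
  (∑ z, r ℓ y z * Real.log (r ℓ y z)) - sK r ℓ y * Real.log (sK r ℓ y)

noncomputable def WtK (g : (Fin K → 𝒳) → (Fin L → 𝒴) → ℝ) (r : Fin L → 𝒴 → 𝒵 → ℝ)
    (ℓ : Fin L) (y : 𝒴) : ℝ :=
  ∑ x, ∑ y', if y' ℓ = y then g x y' * ∏ ℓ' ∈ Finset.univ.erase ℓ, sK r ℓ' (y' ℓ') else 0

noncomputable def hK (g : (Fin K → 𝒳) → (Fin L → 𝒴) → ℝ) (r : Fin L → 𝒴 → 𝒵 → ℝ)
    (ℓ : Fin L) : ℝ := -∑ y, WtK g r ℓ y * psiK r ℓ y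

noncomputable def mK (g : (Fin K → 𝒳) → (Fin L → 𝒴) → ℝ) (r : Fin L → 𝒴 → 𝒵 → ℝ)
    (S : Finset (Fin K)) (T : Finset (Fin L)) (a : ↥S → 𝒳) (b : ↥T → 𝒴) : ℝ :=
  ∑ x, ∑ y, if rT S x = a ∧ rT T y = b then g x y * ∏ ℓ ∈ Tᶜ, sK r ℓ (y ℓ) else 0

lemma pf_fst {U V : Type*} [Fintype U] [DecidableEq U] [Fintype V] (J : U × V → ℝ) (u : U) :
    pf Prod.fst J u = ∑ v, J (u, v) := by
  classical
  unfold pf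
  rw [Fintype.sum_prod_type, Finset.sum_eq_single u]
  · exact Finset.sum_congr rfl fun v _ => if_pos rfl
  · intro u' _ hu'
    exact Finset.sum_eq_zero fun v _ => if_neg hu'
  · simp

lemma pf_F1 (P : (Fin K → 𝒳) × (Fin L → 𝒴) × (Fin L → 𝒵) → ℝ)
    (g : (Fin K → 𝒳) → (Fin L → 𝒴) → ℝ) (r : Fin L → 𝒴 → 𝒵 → ℝ)
    (hP : ∀ x y z, P (x,y,z) = g x y * ∏ ℓ, r ℓ (y ℓ) (z ℓ))
    (S : Finset (Fin K)) (T : Finset (Fin L)) (a : ↥S → 𝒳) (b : ↥T → 𝒴) (z : ↥T → 𝒵) :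
    pf (fun t => ((rT S t.1, rT T t.2.1), rT T t.2.2)) P ((a,b),z)
      = mK g r S T a b * ∏ ℓ : ↥T, r ℓ.1 (b ℓ) (z ℓ) := by
  classical
  unfold pf
  rw [Fintype.sum_prod_type]
  have hinner : ∀ x : Fin K → 𝒳,
      (∑ t : (Fin L → 𝒴) × (Fin L → 𝒵),
        if ((rT S x, rT T t.1), rT T t.2) = ((a,b),z) then P (x, t) else 0)
      = ∑ y : Fin L → 𝒴,
          (if rT S x = a ∧ rT T y = b then g x y * ∏ ℓ ∈ Tᶜ, sK r ℓ (y ℓ) else 0) *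
            ∏ ℓ : ↥T, r ℓ.1 (b ℓ) (z ℓ) := by
    intro x
    rw [Fintype.sum_prod_type]
    refine Finset.sum_congr rfl fun y _ => ?_
    by_cases h12 : rT S x = a ∧ rT T y = b
    · have hcong : ∀ z' : Fin L → 𝒵,
          (if ((rT S x, rT T y), rT T z') = ((a,b),z) then P (x, (y, z')) else 0)
            = if rT T z' = z then g x y * ∏ ℓ, r ℓ (y ℓ) (z' ℓ) else 0 := by
        intro z'
        rw [hP]
        simp [Prod.ext_iff, h12.1, h12.2]
      rw [Finset.sum_congr rfl fun z' _ => hcong z', if_pos h12]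
      have hpull : (∑ z' : Fin L → 𝒵, if rT T z' = z then g x y * ∏ ℓ, r ℓ (y ℓ) (z' ℓ) else 0)
          = g x y * ∑ z' : Fin L → 𝒵, (if rT T z' = z then ∏ ℓ, r ℓ (y ℓ) (z' ℓ) else 0) := by
        rw [Finset.mul_sum]
        exact Finset.sum_congr rfl fun z' _ => by split_ifs <;> simp
      rw [hpull, sum_pi_prod_restrict T (fun ℓ v => r ℓ (y ℓ) v) z]
      have hb : ∀ ℓ : ↥T, r ℓ.1 (y ℓ.1) (z ℓ) = r ℓ.1 (b ℓ) (z ℓ) := by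
        intro ℓ
        rw [show y ℓ.1 = b ℓ from congrFun h12.2 ℓ]
      rw [Finset.prod_congr rfl fun ℓ _ => hb ℓ]
      show g x y * ((∏ ℓ : ↥T, r ℓ.1 (b ℓ) (z ℓ)) * ∏ ℓ ∈ Tᶜ, ∑ v, r ℓ (y ℓ) v)
        = (g x y * ∏ ℓ ∈ Tᶜ, sK r ℓ (y ℓ)) * ∏ ℓ : ↥T, r ℓ.1 (b ℓ) (z ℓ)
      unfold sK
      ring
    · rw [if_neg h12, Finset.sum_eq_zero, zero_mul]
      intro z' _
      rw [if_neg]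
      intro hcon
      rw [Prod.ext_iff, Prod.ext_iff] at hcon
      exact h12 ⟨hcon.1.1, hcon.1.2⟩
  rw [Finset.sum_congr rfl fun x _ => hinner x]
  unfold mK
  rw [Finset.sum_mul]
  exact Finset.sum_congr rfl fun x _ => by rw [Finset.sum_mul]

lemma pf_F0 (P : (Fin K → 𝒳) × (Fin L → 𝒴) × (Fin L → 𝒵) → ℝ)
    (g : (Fin K → 𝒳) → (Fin L → 𝒴) → ℝ) (r : Fin L → 𝒴 → 𝒵 → ℝ)
    (hP : ∀ x y z, P (x,y,z) = g x y * ∏ ℓ, r ℓ (y ℓ) (z ℓ))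
    (S : Finset (Fin K)) (T : Finset (Fin L)) (a : ↥S → 𝒳) (b : ↥T → 𝒴) :
    pf (fun t => (rT S t.1, rT T t.2.1)) P (a,b)
      = mK g r S T a b * ∏ ℓ : ↥T, sK r ℓ.1 (b ℓ) := by
  classical
  have hcomp : (fun t : (Fin K → 𝒳) × (Fin L → 𝒴) × (Fin L → 𝒵) => (rT S t.1, rT T t.2.1))
      = Prod.fst ∘ (fun t => ((rT S t.1, rT T t.2.1), rT T t.2.2)) := rfl
  rw [hcomp, ← pf_comp, pf_fst]
  rw [Finset.sum_congr rfl fun z _ => pf_F1 P g r hP S T a b z]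
  rw [← Finset.mul_sum, sum_pi_prod (fun (ℓ : ↥T) v => r ℓ.1 (b ℓ) v)]
  rfl

lemma stepB {U : Type*} [Fintype U] (T : Finset (Fin L)) (r : Fin L → 𝒴 → 𝒵 → ℝ)
    (m : U → ℝ) (c : U → ↥T → 𝒴) :
    Hd (fun t : U × (↥T → 𝒵) => m t.1 * ∏ ℓ, r ℓ.1 (c t.1 ℓ) (t.2 ℓ))
      = Hd (fun u => m u * ∏ ℓ, sK r ℓ.1 (c u ℓ))
        - ∑ ℓ : ↥T, ∑ u, m u *
            ((∏ ℓ' ∈ Finset.univ.erase ℓ, sK r ℓ'.1 (c u ℓ')) * psiK r ℓ.1 (c u ℓ)) := by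
  classical
  have hsplitJ : ∀ (u : U) (z : ↥T → 𝒵),
      (m u * ∏ ℓ, r ℓ.1 (c u ℓ) (z ℓ)) * Real.log (m u * ∏ ℓ, r ℓ.1 (c u ℓ) (z ℓ))
        = (m u * ∏ ℓ, r ℓ.1 (c u ℓ) (z ℓ)) * Real.log (m u)
          + ∑ ℓ : ↥T, (m u * ∏ ℓ', r ℓ'.1 (c u ℓ') (z ℓ')) * Real.log (r ℓ.1 (c u ℓ) (z ℓ)) := by
    intro u z
    by_cases h : m u * ∏ ℓ, r ℓ.1 (c u ℓ) (z ℓ) = 0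
    · rw [h]
      simp
    · have hm : m u ≠ 0 := left_ne_zero_of_mul h
      have hp : (∏ ℓ, r ℓ.1 (c u ℓ) (z ℓ)) ≠ 0 := right_ne_zero_of_mul h
      rw [Real.log_mul hm hp,
        Real.log_prod (fun ℓ _ => Finset.prod_ne_zero_iff.1 hp ℓ (Finset.mem_univ ℓ)),
        mul_add, Finset.mul_sum]
  have hsplitM : ∀ u : U,
      (m u * ∏ ℓ, sK r ℓ.1 (c u ℓ)) * Real.log (m u * ∏ ℓ, sK r ℓ.1 (c u ℓ))
        = (m u * ∏ ℓ, sK r ℓ.1 (c u ℓ)) * Real.log (m u)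
          + ∑ ℓ : ↥T, (m u * ∏ ℓ', sK r ℓ'.1 (c u ℓ')) * Real.log (sK r ℓ.1 (c u ℓ)) := by
    intro u
    by_cases h : m u * ∏ ℓ, sK r ℓ.1 (c u ℓ) = 0
    · rw [h]
      simp
    · have hm : m u ≠ 0 := left_ne_zero_of_mul h
      have hp : (∏ ℓ, sK r ℓ.1 (c u ℓ)) ≠ 0 := right_ne_zero_of_mul h
      rw [Real.log_mul hm hp,
        Real.log_prod (fun ℓ _ => Finset.prod_ne_zero_iff.1 hp ℓ (Finset.mem_univ ℓ)),
        mul_add, Finset.mul_sum]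
  have hJ : Hd (fun t : U × (↥T → 𝒵) => m t.1 * ∏ ℓ, r ℓ.1 (c t.1 ℓ) (t.2 ℓ))
      = -(∑ u, (m u * ∏ ℓ, sK r ℓ.1 (c u ℓ)) * Real.log (m u))
        - ∑ ℓ : ↥T, ∑ u, m u *
            ((∑ v, r ℓ.1 (c u ℓ) v * Real.log (r ℓ.1 (c u ℓ) v)) *
              ∏ ℓ' ∈ Finset.univ.erase ℓ, sK r ℓ'.1 (c u ℓ')) := by
    rw [Hd_eq, Fintype.sum_prod_type]
    have e1 : ∀ u : U,
        (∑ z : ↥T → 𝒵, (m u * ∏ ℓ, r ℓ.1 (c u ℓ) (z ℓ)) *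
          Real.log (m u * ∏ ℓ, r ℓ.1 (c u ℓ) (z ℓ)))
        = (m u * ∏ ℓ, sK r ℓ.1 (c u ℓ)) * Real.log (m u)
          + ∑ ℓ : ↥T, m u *
              ((∑ v, r ℓ.1 (c u ℓ) v * Real.log (r ℓ.1 (c u ℓ) v)) *
                ∏ ℓ' ∈ Finset.univ.erase ℓ, sK r ℓ'.1 (c u ℓ')) := by
      intro u
      rw [Finset.sum_congr rfl fun z _ => hsplitJ u z, Finset.sum_add_distrib]
      congr 1
      · rw [← Finset.sum_mul]
        congr 1
        rw [← Finset.mul_sum, sum_pi_prod (fun (ℓ : ↥T) v => r ℓ.1 (c u ℓ) v)]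
        rfl
      · rw [Finset.sum_comm]
        refine Finset.sum_congr rfl fun ℓ _ => ?_
        calc ∑ z : ↥T → 𝒵, (m u * ∏ ℓ', r ℓ'.1 (c u ℓ') (z ℓ')) *
              Real.log (r ℓ.1 (c u ℓ) (z ℓ))
            = m u * ∑ z : ↥T → 𝒵, (∏ ℓ', r ℓ'.1 (c u ℓ') (z ℓ')) *
                Real.log (r ℓ.1 (c u ℓ) (z ℓ)) := by
              rw [Finset.mul_sum]
              exact Finset.sum_congr rfl fun z _ => by ring
          _ = m u * ((∑ v, r ℓ.1 (c u ℓ) v * Real.log (r ℓ.1 (c u ℓ) v)) *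
                ∏ ℓ' ∈ Finset.univ.erase ℓ, sK r ℓ'.1 (c u ℓ')) := by
              rw [sum_pi_prod_single (fun (ℓ' : ↥T) v => r ℓ'.1 (c u ℓ') v)
                (fun v => Real.log (r ℓ.1 (c u ℓ) v)) ℓ]
              rfl
    rw [Finset.sum_congr rfl fun u _ => e1 u, Finset.sum_add_distrib, neg_add,
      Finset.sum_comm]
    ring
  have hMterm : ∀ (u : U) (ℓ : ↥T),
      (m u * ∏ ℓ', sK r ℓ'.1 (c u ℓ')) * Real.log (sK r ℓ.1 (c u ℓ))
        = m u * ((sK r ℓ.1 (c u ℓ) * Real.log (sK r ℓ.1 (c u ℓ))) *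
            ∏ ℓ' ∈ Finset.univ.erase ℓ, sK r ℓ'.1 (c u ℓ')) := by
    intro u ℓ
    rw [← Finset.mul_prod_erase Finset.univ (fun ℓ' => sK r ℓ'.1 (c u ℓ'))
      (Finset.mem_univ ℓ)]
    ring
  have hM : Hd (fun u => m u * ∏ ℓ, sK r ℓ.1 (c u ℓ))
      = -(∑ u, (m u * ∏ ℓ, sK r ℓ.1 (c u ℓ)) * Real.log (m u))
        - ∑ ℓ : ↥T, ∑ u, m u *
            ((sK r ℓ.1 (c u ℓ) * Real.log (sK r ℓ.1 (c u ℓ))) *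
              ∏ ℓ' ∈ Finset.univ.erase ℓ, sK r ℓ'.1 (c u ℓ')) := by
    rw [Hd_eq]
    rw [Finset.sum_congr rfl fun u _ => by rw [hsplitM u,
      Finset.sum_congr rfl fun ℓ _ => hMterm u ℓ]]
    rw [Finset.sum_add_distrib, neg_add, Finset.sum_comm]
    ring
  rw [hJ, hM]
  have hcomb : (∑ ℓ : ↥T, ∑ u, m u *
        ((∑ v, r ℓ.1 (c u ℓ) v * Real.log (r ℓ.1 (c u ℓ) v)) *
          ∏ ℓ' ∈ Finset.univ.erase ℓ, sK r ℓ'.1 (c u ℓ')))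
      = (∑ ℓ : ↥T, ∑ u, m u *
          ((sK r ℓ.1 (c u ℓ) * Real.log (sK r ℓ.1 (c u ℓ))) *
            ∏ ℓ' ∈ Finset.univ.erase ℓ, sK r ℓ'.1 (c u ℓ')))
        + ∑ ℓ : ↥T, ∑ u, m u *
            ((∏ ℓ' ∈ Finset.univ.erase ℓ, sK r ℓ'.1 (c u ℓ')) * psiK r ℓ.1 (c u ℓ)) := by
    rw [← Finset.sum_add_distrib]
    refine Finset.sum_congr rfl fun ℓ _ => ?_
    rw [← Finset.sum_add_distrib]
    refine Finset.sum_congr rfl fun u _ => ?_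
    unfold psiK
    ring
  rw [hcomb]
  ring

lemma prod_erase_coe {ι : Type*} [Fintype ι] [DecidableEq ι] (T : Finset ι) (j : ↥T)
    (f : ι → ℝ) :
    ∏ i ∈ (Finset.univ : Finset ↥T).erase j, f i.1 = ∏ i ∈ T.erase j.1, f i := by
  classical
  refine Finset.prod_bij (fun (a : ↥T) (_ : a ∈ (Finset.univ : Finset ↥T).erase j) => a.1)
    ?_ ?_ ?_ ?_
  · intro a ha
    rw [Finset.mem_erase] at ha ⊢
    exact ⟨fun h => ha.1 (Subtype.ext h), a.2⟩
  · intro a _ b _ h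
    exact Subtype.ext h
  · intro b hb
    rw [Finset.mem_erase] at hb
    exact ⟨⟨b, hb.2⟩, Finset.mem_erase.2 ⟨fun h => hb.1 (congrArg Subtype.val h),
      Finset.mem_univ _⟩, rfl⟩
  · intro a _
    rfl

lemma margC (g : (Fin K → 𝒳) → (Fin L → 𝒴) → ℝ) (r : Fin L → 𝒴 → 𝒵 → ℝ)
    (S : Finset (Fin K)) (T : Finset (Fin L)) (ℓ₀ : Fin L) (hℓ : ℓ₀ ∈ T) (Θ : 𝒴 → ℝ) :
    ∑ u : (↥S → 𝒳) × (↥T → 𝒴), mK g r S T u.1 u.2 *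
      ((∏ ℓ' ∈ Finset.univ.erase (⟨ℓ₀, hℓ⟩ : ↥T), sK r ℓ'.1 (u.2 ℓ')) * Θ (u.2 ⟨ℓ₀, hℓ⟩))
      = ∑ y, WtK g r ℓ₀ y * Θ y := by
  classical
  have hdisj : Disjoint Tᶜ (T.erase ℓ₀) :=
    Disjoint.mono_right (Finset.erase_subset ℓ₀ T) (disjoint_compl_left)
  have hunion : Tᶜ ∪ T.erase ℓ₀ = Finset.univ.erase ℓ₀ := by
    ext i
    simp only [Finset.mem_union, Finset.mem_compl, Finset.mem_erase, Finset.mem_univ, and_true]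
    constructor
    · rintro (h | ⟨h1, _⟩)
      · exact fun he => h (he ▸ hℓ)
      · exact h1
    · intro h
      by_cases hT : i ∈ T
      · exact Or.inr ⟨h, hT⟩
      · exact Or.inl hT
  have hRHS : (∑ y, WtK g r ℓ₀ y * Θ y)
      = ∑ x, ∑ y', g x y' * ((∏ ℓ' ∈ Finset.univ.erase ℓ₀, sK r ℓ' (y' ℓ')) * Θ (y' ℓ₀)) := by
    unfold WtK
    rw [Finset.sum_congr rfl fun y _ => by rw [Finset.sum_mul]]
    rw [Finset.sum_comm]
    refine Finset.sum_congr rfl fun x _ => ?_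
    rw [Finset.sum_congr rfl fun y _ => by rw [Finset.sum_mul]]
    rw [Finset.sum_comm]
    refine Finset.sum_congr rfl fun y' _ => ?_
    rw [Finset.sum_eq_single (y' ℓ₀)]
    · rw [if_pos rfl]
      ring
    · intro y _ hy
      rw [if_neg fun h => hy h.symm, zero_mul]
    · simp
  rw [hRHS, Fintype.sum_prod_type]
  have hLHS : ∀ (u1 : ↥S → 𝒳) (u2 : ↥T → 𝒴), mK g r S T u1 u2 *
      ((∏ ℓ' ∈ Finset.univ.erase (⟨ℓ₀, hℓ⟩ : ↥T), sK r ℓ'.1 (u2 ℓ')) * Θ (u2 ⟨ℓ₀, hℓ⟩))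
      = ∑ x, ∑ y, if rT S x = u1 ∧ rT T y = u2 then
          g x y * ((∏ ℓ' ∈ Finset.univ.erase ℓ₀, sK r ℓ' (y ℓ')) * Θ (y ℓ₀)) else 0 := by
    intro u1 u2
    unfold mK
    rw [Finset.sum_mul]
    refine Finset.sum_congr rfl fun x _ => ?_
    rw [Finset.sum_mul]
    refine Finset.sum_congr rfl fun y _ => ?_
    by_cases h12 : rT S x = u1 ∧ rT T y = u2
    · rw [if_pos h12, if_pos h12]
      have h2 : ∀ ℓ' : ↥T, u2 ℓ' = y ℓ'.1 := fun ℓ' => by rw [← h12.2]; rfl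
      have hprod : (∏ ℓ' ∈ (Finset.univ : Finset ↥T).erase ⟨ℓ₀, hℓ⟩, sK r ℓ'.1 (u2 ℓ'))
          = ∏ ℓ' ∈ T.erase ℓ₀, sK r ℓ' (y ℓ') := by
        rw [← prod_erase_coe T ⟨ℓ₀, hℓ⟩ (fun i => sK r i (y i))]
        exact Finset.prod_congr rfl fun ℓ' _ => by rw [h2 ℓ']
      rw [hprod, h2 ⟨ℓ₀, hℓ⟩]
      rw [← hunion, Finset.prod_union hdisj]
      ring
    · rw [if_neg h12, if_neg h12, zero_mul]
  rw [Finset.sum_congr rfl fun u1 _ => Finset.sum_congr rfl fun u2 _ => hLHS u1 u2]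
  rw [sum_comm4]
  refine Finset.sum_congr rfl fun x _ => Finset.sum_congr rfl fun y _ => ?_
  rw [Finset.sum_eq_single (rT S x)]
  · rw [Finset.sum_eq_single (rT T y)]
    · rw [if_pos ⟨rfl, rfl⟩]
    · intro u2 _ hu2
      rw [if_neg (fun h => hu2 h.2.symm)]
    · simp
  · intro u1 _ hu1
    exact Finset.sum_eq_zero fun u2 _ => if_neg (fun h => hu1 h.1.symm)
  · simp

lemma keyLem (P : (Fin K → 𝒳) × (Fin L → 𝒴) × (Fin L → 𝒵) → ℝ)
    (g : (Fin K → 𝒳) → (Fin L → 𝒴) → ℝ) (r : Fin L → 𝒴 → 𝒵 → ℝ)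
    (hP : ∀ x y z, P (x,y,z) = g x y * ∏ ℓ, r ℓ (y ℓ) (z ℓ))
    (S : Finset (Fin K)) (T : Finset (Fin L)) :
    Hd (pf (fun t => ((rT S t.1, rT T t.2.1), rT T t.2.2)) P)
      = Hd (pf (fun t => (rT S t.1, rT T t.2.1)) P) + ∑ ℓ ∈ T, hK g r ℓ := by
  classical
  have h1 : pf (fun t => ((rT S t.1, rT T t.2.1), rT T t.2.2)) P
      = fun t : ((↥S → 𝒳) × (↥T → 𝒴)) × (↥T → 𝒵) =>
          (fun u : (↥S → 𝒳) × (↥T → 𝒴) => mK g r S T u.1 u.2) t.1 *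
            ∏ ℓ, r ℓ.1 ((fun u : (↥S → 𝒳) × (↥T → 𝒴) => u.2) t.1 ℓ) (t.2 ℓ) := by
    funext t
    obtain ⟨⟨a, b⟩, z⟩ := t
    exact pf_F1 P g r hP S T a b z
  have h0 : pf (fun t => (rT S t.1, rT T t.2.1)) P
      = fun u : (↥S → 𝒳) × (↥T → 𝒴) =>
          (fun u : (↥S → 𝒳) × (↥T → 𝒴) => mK g r S T u.1 u.2) u *
            ∏ ℓ, sK r ℓ.1 ((fun u : (↥S → 𝒳) × (↥T → 𝒴) => u.2) u ℓ) := by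
    funext u
    obtain ⟨a, b⟩ := u
    exact pf_F0 P g r hP S T a b
  rw [h1, h0, stepB T r (fun u : (↥S → 𝒳) × (↥T → 𝒴) => mK g r S T u.1 u.2)
    (fun u : (↥S → 𝒳) × (↥T → 𝒴) => u.2)]
  rw [sub_eq_add_neg]
  congr 1
  rw [← Finset.sum_neg_distrib, ← Finset.sum_coe_sort T (hK g r)]
  refine Finset.sum_congr rfl fun ℓ _ => ?_
  have := margC g r S T ℓ.1 ℓ.2 (psiK r ℓ.1)
  rw [show (⟨ℓ.1, ℓ.2⟩ : ↥T) = ℓ from rfl] at this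
  rw [this]
  rfl

end Key
section Assemble

lemma Hd_pf_congr {A B C' : Type*} [Fintype A] [Fintype B] [DecidableEq B] [Fintype C']
    [DecidableEq C'] (P : A → ℝ) (f : A → B) (f' : A → C') (σ : B → C')
    (hσ : Function.Injective σ) (hcomp : ∀ a, σ (f a) = f' a) :
    Hd (pf f' P) = Hd (pf f P) := by
  have hff : f' = σ ∘ f := funext fun a => (hcomp a).symm
  rw [hff, ← pf_comp, Hd_pf_inj hσ]

lemma CMI_pf {A B Cc D : Type*} [Fintype A] [DecidableEq A] [Fintype B] [DecidableEq B]
    [Fintype Cc] [DecidableEq Cc] [Fintype D] [DecidableEq D]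
    (P : D → ℝ) (hP : ∀ t, 0 ≤ P t) (fA : D → A) (fB : D → B) (fC : D → Cc) :
    CMI (pf (fun t => (fA t, fB t, fC t)) P)
      = Hd (pf (fun t => (fA t, fC t)) P) + Hd (pf (fun t => (fB t, fC t)) P)
        - Hd (pf fC P) - Hd (pf (fun t => (fA t, fB t, fC t)) P) := by
  rw [CMI_eq_Hd _ (fun t => pf_nonneg _ _ hP t), pf_comp, pf_comp, pf_comp]
  rfl

lemma cmi_pf {A B Cc D : Type*} [Fintype A] [DecidableEq A] [Fintype B] [DecidableEq B]
    [Fintype Cc] [DecidableEq Cc] [Fintype D] [DecidableEq D]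
    (p : Ω → ℝ) (W : Ω → D) (hp0 : ∀ ω, 0 ≤ p ω)
    (fA : D → A) (fB : D → B) (fC : D → Cc)
    (Aω : Ω → A) (Bω : Ω → B) (Cω : Ω → Cc)
    (hA : ∀ ω, fA (W ω) = Aω ω) (hB : ∀ ω, fB (W ω) = Bω ω) (hC : ∀ ω, fC (W ω) = Cω ω) :
    cmi p Aω Bω Cω
      = Hd (pf (fun t => (fA t, fC t)) (dist p W)) + Hd (pf (fun t => (fB t, fC t)) (dist p W))
        - Hd (pf fC (dist p W)) - Hd (pf (fun t => (fA t, fB t, fC t)) (dist p W)) := by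
  rw [cmi_eq_CMI]
  have hfun : (fun ω => (Aω ω, Bω ω, Cω ω)) = (fun t => (fA t, fB t, fC t)) ∘ W := by
    funext ω
    show (Aω ω, Bω ω, Cω ω) = (fA (W ω), fB (W ω), fC (W ω))
    rw [hA, hB, hC]
  have hQ : dist p (fun ω => (Aω ω, Bω ω, Cω ω))
      = pf (fun t => (fA t, fB t, fC t)) (dist p W) := by
    rw [dist_eq_pf, dist_eq_pf, pf_comp, hfun]
  have hnn : ∀ t, 0 ≤ dist p W t := by
    intro t
    rw [dist_eq_pf]
    exact pf_nonneg _ _ hp0 t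
  rw [hQ, CMI_pf (dist p W) hnn fA fB fC]

lemma inj_swap_pair {A B C : Type*} {f : A → C} (hf : Function.Injective f) :
    Function.Injective (fun ab : B × A => (f ab.2, ab.1)) := by
  intro a b h
  simp only [Prod.mk.injEq] at h
  exact Prod.ext h.2 (hf h.1)

lemma inj_assoc2 {A B C : Type*} :
    Function.Injective (fun w : (A × B) × C => (w.1.2, (w.2, w.1.1))) := by
  intro a b h
  simp only [Prod.mk.injEq] at h
  obtain ⟨h1, h2, h3⟩ := h
  exact Prod.ext (Prod.ext h3 h1) h2

lemma inj_assoc3 {A B C D : Type*} {g : C → D} (hg : Function.Injective g) :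
    Function.Injective (fun w : A × B × C => ((g w.2.2, w.1), w.2.1)) := by
  intro a b h
  simp only [Prod.mk.injEq] at h
  obtain ⟨⟨h1, h2⟩, h3⟩ := h
  exact Prod.ext h2 (Prod.ext h3 (hg h1))

end Assemble

/-- Under the uplink C-RAN factorization, any point of the joint-decoding
region `R_JD` lying on the dominant face (`C([L]) − R([K]) = I(Y_1^L;Ŷ_1^L|X_1^K)`)
satisfies `C(T) − R(S) ≤ I(Y_T; Ŷ_T | X_S)` for all `S ⊆ [K]`, `T ⊆ [L]`. -/
theorem stmt12 {Ω 𝒳 𝒴 𝒵 : Type*} [Fintype Ω]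
    [Fintype 𝒳] [DecidableEq 𝒳] [Fintype 𝒴] [DecidableEq 𝒴] [Fintype 𝒵] [DecidableEq 𝒵]
    {K L : ℕ} (p : Ω → ℝ) (hp : IsPMF p)
    (X : Fin K → Ω → 𝒳) (Y : Fin L → Ω → 𝒴) (Yh : Fin L → Ω → 𝒵)
    (hFac : CRANFactor p X Y Yh) (R : Fin K → ℝ) (C : Fin L → ℝ)
    (hJD : ∀ (S' : Finset (Fin K)) (T' : Finset (Fin L)),
      (∑ i ∈ T', C i) - (∑ i ∈ S', R i) ≥
        cmi p (tup Y T') (tup Yh T') (fun ω (i : Fin K) => X i ω) -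
          cmi p (tup X S') (tup Yh T'ᶜ) (tup X S'ᶜ))
    (hDF : (∑ i, C i) - (∑ i, R i) =
      cmi p (tup Y Finset.univ) (tup Yh Finset.univ) (fun ω (i : Fin K) => X i ω))
    (S : Finset (Fin K)) (T : Finset (Fin L)) :
    (∑ i ∈ T, C i) - (∑ i ∈ S, R i) ≤ cmi p (tup Y T) (tup Yh T) (tup X S) := by
  classical
  obtain ⟨q, r, hq0, hr0, hfac⟩ := hFac
  set W₀ : Ω → ((Fin K → 𝒳) × (Fin L → 𝒴) × (Fin L → 𝒵)) :=
    fun ω => (fun i => X i ω, fun ℓ => Y ℓ ω, fun ℓ => Yh ℓ ω) with hW₀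
  set g : (Fin K → 𝒳) → (Fin L → 𝒴) → ℝ :=
    fun x y => (∏ i, dist p (X i) (x i)) * q x y with hgdef
  have hPfac : ∀ x y z, dist p W₀ (x, y, z) = g x y * ∏ ℓ, r ℓ (y ℓ) (z ℓ) :=
    fun x y z => hfac x y z
  have hp0 : ∀ ω, 0 ≤ p ω := hp.1
  have hP0nn : ∀ t, 0 ≤ dist p W₀ t := by
    intro t
    rw [dist_eq_pf]
    exact pf_nonneg _ _ hp0 t
  -- the three instances of the key conditional-entropy identity
  have key1 : Hd (pf (fun t : (Fin K → 𝒳) × (Fin L → 𝒴) × (Fin L → 𝒵) => ((rT Finset.univ t.1, rT Finset.univ t.2.1), rT Finset.univ t.2.2)) (dist p W₀))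
      = Hd (pf (fun t : (Fin K → 𝒳) × (Fin L → 𝒴) × (Fin L → 𝒵) => (rT Finset.univ t.1, rT Finset.univ t.2.1)) (dist p W₀)) + ∑ ℓ ∈ Finset.univ, hK g r ℓ :=
    keyLem (dist p W₀) g r hPfac Finset.univ Finset.univ
  have key2 : Hd (pf (fun t : (Fin K → 𝒳) × (Fin L → 𝒴) × (Fin L → 𝒵) => ((rT Finset.univ t.1, rT Tᶜ t.2.1), rT Tᶜ t.2.2)) (dist p W₀))
      = Hd (pf (fun t : (Fin K → 𝒳) × (Fin L → 𝒴) × (Fin L → 𝒵) => (rT Finset.univ t.1, rT Tᶜ t.2.1)) (dist p W₀)) + ∑ ℓ ∈ Tᶜ, hK g r ℓ :=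
    keyLem (dist p W₀) g r hPfac Finset.univ Tᶜ
  have key3 : Hd (pf (fun t : (Fin K → 𝒳) × (Fin L → 𝒴) × (Fin L → 𝒵) => ((rT S t.1, rT T t.2.1), rT T t.2.2)) (dist p W₀))
      = Hd (pf (fun t : (Fin K → 𝒳) × (Fin L → 𝒴) × (Fin L → 𝒵) => (rT S t.1, rT T t.2.1)) (dist p W₀)) + ∑ ℓ ∈ T, hK g r ℓ :=
    keyLem (dist p W₀) g r hPfac S T
  -- instance D (the goal)
  have hDeq : cmi p (tup Y T) (tup Yh T) (tup X S)
      = Hd (pf (fun t : (Fin K → 𝒳) × (Fin L → 𝒴) × (Fin L → 𝒵) => (rT S t.1, rT T t.2.1)) (dist p W₀)) + Hd (pf (fun t : (Fin K → 𝒳) × (Fin L → 𝒴) × (Fin L → 𝒵) => (rT S t.1, rT T t.2.2)) (dist p W₀)) - Hd (pf (fun t : (Fin K → 𝒳) × (Fin L → 𝒴) × (Fin L → 𝒵) => rT S t.1) (dist p W₀)) - Hd (pf (fun t : (Fin K → 𝒳) × (Fin L → 𝒴) × (Fin L → 𝒵) => ((rT S t.1, rT T t.2.1), rT T t.2.2))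 (dist p W₀)) := by
    rw [cmi_pf p W₀ hp0 (fun t => rT T t.2.1) (fun t => rT T t.2.2) (fun t => rT S t.1)
      (tup Y T) (tup Yh T) (tup X S) (fun ω => rfl) (fun ω => rfl) (fun ω => rfl)]
    have e1 : Hd (pf (fun t : (Fin K → 𝒳) × (Fin L → 𝒴) × (Fin L → 𝒵) => (rT T t.2.1, rT S t.1)) (dist p W₀)) = Hd (pf (fun t : (Fin K → 𝒳) × (Fin L → 𝒴) × (Fin L → 𝒵) => (rT S t.1, rT T t.2.1)) (dist p W₀)) :=
      Hd_pf_congr (dist p W₀) (fun t => (rT S t.1, rT T t.2.1)) _ Prod.swap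
        Prod.swap_injective (fun t => rfl)
    have e2 : Hd (pf (fun t : (Fin K → 𝒳) × (Fin L → 𝒴) × (Fin L → 𝒵) => (rT T t.2.2, rT S t.1)) (dist p W₀)) = Hd (pf (fun t : (Fin K → 𝒳) × (Fin L → 𝒴) × (Fin L → 𝒵) => (rT S t.1, rT T t.2.2)) (dist p W₀)) :=
      Hd_pf_congr (dist p W₀) (fun t => (rT S t.1, rT T t.2.2)) _ Prod.swap
        Prod.swap_injective (fun t => rfl)
    have e4 : Hd (pf (fun t : (Fin K → 𝒳) × (Fin L → 𝒴) × (Fin L → 𝒵) => (rT T t.2.1, rT T t.2.2, rT S t.1)) (dist p W₀))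
        = Hd (pf (fun t : (Fin K → 𝒳) × (Fin L → 𝒴) × (Fin L → 𝒵) => ((rT S t.1, rT T t.2.1), rT T t.2.2)) (dist p W₀)) :=
      Hd_pf_congr (dist p W₀) (fun t => ((rT S t.1, rT T t.2.1), rT T t.2.2)) _
        (fun w => (w.1.2, (w.2, w.1.1))) inj_assoc2 (fun t => rfl)
    rw [e1, e2, e4]
  -- instances A and B (conditioning on the full X-tuple)
  have hABeq : ∀ T' : Finset (Fin L),
      cmi p (tup Y T') (tup Yh T') (fun ω (i : Fin K) => X i ω)
      = Hd (pf (fun t : (Fin K → 𝒳) × (Fin L → 𝒴) × (Fin L → 𝒵) => (rT Finset.univ t.1, rT T' t.2.1)) (dist p W₀)) + Hd (pf (fun t : (Fin K → 𝒳) × (Fin L → 𝒴) × (Fin L → 𝒵) => (rT Finset.univ t.1, rT T' t.2.2)) (dist p W₀)) - Hd (pf (fun t : (Fin K → 𝒳) × (Fin L → 𝒴) × (Fin L → 𝒵) => rT Finset.univ t.1) (dist p W₀)) - Hd (pf (fun t : (Fin K → 𝒳) × (Fin L → 𝒴) × (Fin L → 𝒵) => ((rT Finset.univ t.1, rT T'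 t.2.1), rT T' t.2.2)) (dist p W₀)) := by
    intro T'
    rw [cmi_pf p W₀ hp0 (fun t => rT T' t.2.1) (fun t => rT T' t.2.2) (fun t => t.1)
      (tup Y T') (tup Yh T') (fun ω (i : Fin K) => X i ω)
      (fun ω => rfl) (fun ω => rfl) (fun ω => rfl)]
    have e1 : Hd (pf (fun t : (Fin K → 𝒳) × (Fin L → 𝒴) × (Fin L → 𝒵) => (rT T' t.2.1, t.1)) (dist p W₀)) = Hd (pf (fun t : (Fin K → 𝒳) × (Fin L → 𝒴) × (Fin L → 𝒵) => (rT Finset.univ t.1, rT T' t.2.1)) (dist p W₀)) :=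
      (Hd_pf_congr (dist p W₀) (fun t => (rT T' t.2.1, t.1)) _
        (fun yx => (rT Finset.univ yx.2, yx.1)) (inj_swap_pair rT_univ_inj) (fun t => rfl)).symm
    have e2 : Hd (pf (fun t : (Fin K → 𝒳) × (Fin L → 𝒴) × (Fin L → 𝒵) => (rT T' t.2.2, t.1)) (dist p W₀)) = Hd (pf (fun t : (Fin K → 𝒳) × (Fin L → 𝒴) × (Fin L → 𝒵) => (rT Finset.univ t.1, rT T' t.2.2)) (dist p W₀)) :=
      (Hd_pf_congr (dist p W₀) (fun t => (rT T' t.2.2, t.1)) _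
        (fun yx => (rT Finset.univ yx.2, yx.1)) (inj_swap_pair rT_univ_inj) (fun t => rfl)).symm
    have e3 : Hd (pf (fun t : (Fin K → 𝒳) × (Fin L → 𝒴) × (Fin L → 𝒵) => t.1) (dist p W₀)) = Hd (pf (fun t : (Fin K → 𝒳) × (Fin L → 𝒴) × (Fin L → 𝒵) => rT Finset.univ t.1) (dist p W₀)) :=
      (Hd_pf_congr (dist p W₀) (fun t => t.1) _ (rT Finset.univ) rT_univ_inj (fun t => rfl)).symm
    have e4 : Hd (pf (fun t : (Fin K → 𝒳) × (Fin L → 𝒴) × (Fin L → 𝒵) => (rT T' t.2.1, rT T' t.2.2, t.1)) (dist p W₀))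
        = Hd (pf (fun t : (Fin K → 𝒳) × (Fin L → 𝒴) × (Fin L → 𝒵) => ((rT Finset.univ t.1, rT T' t.2.1), rT T' t.2.2)) (dist p W₀)) :=
      (Hd_pf_congr (dist p W₀) (fun t => (rT T' t.2.1, rT T' t.2.2, t.1)) _
        (fun w => ((rT Finset.univ w.2.2, w.1), w.2.1)) (inj_assoc3 rT_univ_inj)
        (fun t => rfl)).symm
    rw [e1, e2, e3, e4]
  -- instance C
  have hCeq : cmi p (tup X Sᶜ) (tup Yh Tᶜᶜ) (tup X Sᶜᶜ)
      = Hd (pf (fun t : (Fin K → 𝒳) × (Fin L → 𝒴) × (Fin L → 𝒵) => rT Finset.univ t.1) (dist p W₀)) + Hd (pf (fun t : (Fin K → 𝒳) × (Fin L → 𝒴) × (Fin L → 𝒵) => (rT S t.1, rT T t.2.2)) (dist p W₀)) - Hd (pf (fun t : (Fin K → 𝒳) × (Fin L → 𝒴) × (Fin L → 𝒵) => rT S t.1) (dist p W₀)) - Hd (pf (fun t : (Fin K → 𝒳) × (Fin L → 𝒴) × (Fin L → 𝒵) => (rT Finset.univ t.1, rT T t.2.2)) (dist p W₀)) := by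
    rw [cmi_pf p W₀ hp0 (fun t => rT Sᶜ t.1) (fun t => rT Tᶜᶜ t.2.2) (fun t => rT Sᶜᶜ t.1)
      (tup X Sᶜ) (tup Yh Tᶜᶜ) (tup X Sᶜᶜ) (fun ω => rfl) (fun ω => rfl) (fun ω => rfl)]
    have e1 : Hd (pf (fun t : (Fin K → 𝒳) × (Fin L → 𝒴) × (Fin L → 𝒵) => (rT Sᶜ t.1, rT Sᶜᶜ t.1)) (dist p W₀)) = Hd (pf (fun t : (Fin K → 𝒳) × (Fin L → 𝒴) × (Fin L → 𝒵) => rT Finset.univ t.1) (dist p W₀)) := by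
      refine (Hd_pf_congr (dist p W₀) (fun t => (rT Sᶜ t.1, rT Sᶜᶜ t.1)) _
        (fun w => rT Finset.univ (mrgE S (rcast (compl_compl S) w.2, w.1))) ?_
        (fun t => by simp only [rcast_rT, mrgE_apply_rT])).symm
      intro a b h
      have h2 := Prod.ext_iff.1 ((mrgE S).injective (rT_univ_inj h))
      exact Prod.ext h2.2 (rcast_inj (compl_compl S) h2.1)
    have e2 : Hd (pf (fun t : (Fin K → 𝒳) × (Fin L → 𝒴) × (Fin L → 𝒵) => (rT Tᶜᶜ t.2.2, rT Sᶜᶜ t.1)) (dist p W₀)) = Hd (pf (fun t : (Fin K → 𝒳) × (Fin L → 𝒴) × (Fin L → 𝒵) => (rT S t.1, rT T t.2.2)) (dist p W₀)) := by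
      refine Hd_pf_congr (dist p W₀) (fun t => (rT S t.1, rT T t.2.2)) _
        (fun w => (rcast (compl_compl T).symm w.2, rcast (compl_compl S).symm w.1)) ?_
        (fun t => rfl)
      intro a b h
      simp only [Prod.mk.injEq] at h
      exact Prod.ext (rcast_inj (compl_compl S).symm h.2) (rcast_inj (compl_compl T).symm h.1)
    have e3 : Hd (pf (fun t : (Fin K → 𝒳) × (Fin L → 𝒴) × (Fin L → 𝒵) => rT Sᶜᶜ t.1) (dist p W₀)) = Hd (pf (fun t : (Fin K → 𝒳) × (Fin L → 𝒴) × (Fin L → 𝒵) => rT S t.1) (dist p W₀)) :=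
      Hd_pf_congr (dist p W₀) (fun t => rT S t.1) _ (rcast (compl_compl S).symm)
        (rcast_inj _) (fun t => rfl)
    have e4 : Hd (pf (fun t : (Fin K → 𝒳) × (Fin L → 𝒴) × (Fin L → 𝒵) => (rT Sᶜ t.1, rT Tᶜᶜ t.2.2, rT Sᶜᶜ t.1)) (dist p W₀))
        = Hd (pf (fun t : (Fin K → 𝒳) × (Fin L → 𝒴) × (Fin L → 𝒵) => (rT Finset.univ t.1, rT T t.2.2)) (dist p W₀)) := by
      refine (Hd_pf_congr (dist p W₀) (fun t => (rT Sᶜ t.1, rT Tᶜᶜ t.2.2, rT Sᶜᶜ t.1)) _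
        (fun w => (rT Finset.univ (mrgE S (rcast (compl_compl S) w.2.2, w.1)),
          rcast (compl_compl T) w.2.1)) ?_
        (fun t => by simp only [rcast_rT, mrgE_apply_rT])).symm
      intro a b h
      simp only [Prod.mk.injEq] at h
      have h2 := Prod.ext_iff.1 ((mrgE S).injective (rT_univ_inj h.1))
      exact Prod.ext h2.2 (Prod.ext (rcast_inj (compl_compl T) h.2) (rcast_inj (compl_compl S) h2.1))
    rw [e1, e2, e3, e4]
  -- instance E (nonnegative slack)
  have hE0 : 0 ≤ CMI (pf (fun t : (Fin K → 𝒳) × (Fin L → 𝒴) × (Fin L → 𝒵) => (rT T t.2.2, rT Tᶜ t.2.2, t.1)) (dist p W₀)) :=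
    CMI_nonneg _ (fun t => pf_nonneg _ _ hP0nn t)
  have hEeq : CMI (pf (fun t : (Fin K → 𝒳) × (Fin L → 𝒴) × (Fin L → 𝒵) => (rT T t.2.2, rT Tᶜ t.2.2, t.1)) (dist p W₀))
      = Hd (pf (fun t : (Fin K → 𝒳) × (Fin L → 𝒴) × (Fin L → 𝒵) => (rT Finset.univ t.1, rT T t.2.2)) (dist p W₀)) + Hd (pf (fun t : (Fin K → 𝒳) × (Fin L → 𝒴) × (Fin L → 𝒵) => (rT Finset.univ t.1, rT Tᶜ t.2.2)) (dist p W₀)) - Hd (pf (fun t : (Fin K → 𝒳) × (Fin L → 𝒴) × (Fin L → 𝒵) => rT Finset.univ t.1) (dist p W₀)) - Hd (pf (fun t : (Fin K → 𝒳) × (Fin L → 𝒴) × (Fin L → 𝒵) => (rT Finset.univ t.1, rT Finset.univ t.2.2)) (dist p W₀)) := by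
    rw [CMI_pf (dist p W₀) hP0nn (fun t => rT T t.2.2) (fun t => rT Tᶜ t.2.2) (fun t => t.1)]
    have e1 : Hd (pf (fun t : (Fin K → 𝒳) × (Fin L → 𝒴) × (Fin L → 𝒵) => (rT T t.2.2, t.1)) (dist p W₀)) = Hd (pf (fun t : (Fin K → 𝒳) × (Fin L → 𝒴) × (Fin L → 𝒵) => (rT Finset.univ t.1, rT T t.2.2)) (dist p W₀)) :=
      (Hd_pf_congr (dist p W₀) (fun t => (rT T t.2.2, t.1)) _
        (fun yx => (rT Finset.univ yx.2, yx.1)) (inj_swap_pair rT_univ_inj) (fun t => rfl)).symm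
    have e2 : Hd (pf (fun t : (Fin K → 𝒳) × (Fin L → 𝒴) × (Fin L → 𝒵) => (rT Tᶜ t.2.2, t.1)) (dist p W₀)) = Hd (pf (fun t : (Fin K → 𝒳) × (Fin L → 𝒴) × (Fin L → 𝒵) => (rT Finset.univ t.1, rT Tᶜ t.2.2)) (dist p W₀)) :=
      (Hd_pf_congr (dist p W₀) (fun t => (rT Tᶜ t.2.2, t.1)) _
        (fun yx => (rT Finset.univ yx.2, yx.1)) (inj_swap_pair rT_univ_inj) (fun t => rfl)).symm
    have e3 : Hd (pf (fun t : (Fin K → 𝒳) × (Fin L → 𝒴) × (Fin L → 𝒵) => t.1) (dist p W₀)) = Hd (pf (fun t : (Fin K → 𝒳) × (Fin L → 𝒴) × (Fin L → 𝒵) => rT Finset.univ t.1) (dist p W₀)) :=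
      (Hd_pf_congr (dist p W₀) (fun t => t.1) _ (rT Finset.univ) rT_univ_inj (fun t => rfl)).symm
    have e4 : Hd (pf (fun t : (Fin K → 𝒳) × (Fin L → 𝒴) × (Fin L → 𝒵) => (rT T t.2.2, rT Tᶜ t.2.2, t.1)) (dist p W₀))
        = Hd (pf (fun t : (Fin K → 𝒳) × (Fin L → 𝒴) × (Fin L → 𝒵) => (rT Finset.univ t.1, rT Finset.univ t.2.2)) (dist p W₀)) := by
      refine (Hd_pf_congr (dist p W₀) (fun t => (rT T t.2.2, rT Tᶜ t.2.2, t.1)) _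
        (fun w => (rT Finset.univ w.2.2, rT Finset.univ (mrgE T (w.1, w.2.1)))) ?_
        (fun t => by simp only [mrgE_apply_rT])).symm
      intro a b h
      simp only [Prod.mk.injEq] at h
      have h2 := Prod.ext_iff.1 ((mrgE T).injective (rT_univ_inj h.2))
      exact Prod.ext h2.1 (Prod.ext h2.2 (rT_univ_inj h.1))
    rw [e1, e2, e3, e4]
  rw [hEeq] at hE0
  -- arithmetic
  have hJD' := hJD Sᶜ Tᶜ
  rw [hABeq Tᶜ, hCeq] at hJD'
  rw [hABeq Finset.univ] at hDF
  have hsum1 : (∑ ℓ ∈ T, hK g r ℓ) + ∑ ℓ ∈ Tᶜ, hK g r ℓ = ∑ ℓ ∈ Finset.univ, hK g r ℓ :=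
    Finset.sum_add_sum_compl T (hK g r)
  have hsC : (∑ i ∈ T, C i) + ∑ i ∈ Tᶜ, C i = ∑ i, C i := Finset.sum_add_sum_compl T C
  have hsR : (∑ i ∈ S, R i) + ∑ i ∈ Sᶜ, R i = ∑ i, R i := Finset.sum_add_sum_compl S R
  rw [hDeq]
  linarith [hE0, hJD', hDF, key1, key2, key3, hsum1, hsC, hsR]


end CRAN
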